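/- For the period-doubling word pd, the abelian complexity ρ^{ab}_{pd} satisfies ρ^{ab}_{pd}(2ℓ) = ρ^{ab}_{pd}(ℓ) and ρ^{ab}_{pd}(4ℓ ± 1) = ρ^{ab}_{pd}(ℓ) + 1 for all ℓ ≥ 1, given ρ^{ab}_{pd}(1) = 2. Consequently any function ρ with ρ(ℓ) = ρ^{ab}_{pd}(ℓ) - 1 satisfies ρ(2ℓ) = ρ(ℓ) and ρ(4ℓ ± 1) = ρ(ℓ) + 1. -/

import Mathlib

/-- `u` is a factor of the infinite word `w`. -/
def IsFactorI {α : Type*} (u : List α) (w : ℕ → α) : Prop :=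
  ∃ j : ℕ, u = (List.range u.length).map (fun i => w (j + i))

/-- The period-doubling morphism `0 ↦ 01`, `1 ↦ 00`. -/
def pdMu : ℕ → List ℕ
  | 0 => [0, 1]
  | _ => [0, 0]

/-- Iterates of the period-doubling morphism on the letter `0`. -/
def pdIter : ℕ → List ℕ
  | 0 => [0]
  | k + 1 => (pdIter k).flatMap pdMu

/-- The period-doubling word, the fixed point of `0 ↦ 01`, `1 ↦ 00`. -/
def pd (n : ℕ) : ℕ := (pdIter (n + 1)).getD n 0

/-- The abelian complexity of `pd`: the number of Parikh vectors of length-`ℓ` factors. -/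
noncomputable def pdAb (ℓ : ℕ) : ℕ :=
  Nat.card {p : ℕ × ℕ // ∃ u : List ℕ, IsFactorI u pd ∧ u.length = ℓ ∧
    p = (u.count 0, u.count 1)}

lemma pdIter_length (k : ℕ) : (pdIter k).length = 2 ^ k := by
  induction k with
  | zero => rfl
  | succ k ih =>
    rw [pdIter, List.length_flatMap]
    have : ∀ x ∈ pdIter k, (pdMu x).length = 2 := by
      intro x _; cases x <;> rfl
    rw [List.map_congr_left this]
    simp [ih, pow_succ, mul_comm]
lemma pdIter_prefix (k : ℕ) : pdIter k <+: pdIter (k+1) := by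
  induction k with
  | zero => exact ⟨[1], rfl⟩
  | succ k ih =>
    obtain ⟨t, ht⟩ := ih
    refine ⟨t.flatMap pdMu, ?_⟩
    rw [pdIter, pdIter, ← ht, List.flatMap_append]
lemma pdIter_prefix' {k K : ℕ} (h : k ≤ K) : pdIter k <+: pdIter K := by
  induction K with
  | zero => simp_all
  | succ K ih =>
    rcases Nat.lt_or_ge k (K+1) with h' | h'
    · exact (ih (by omega)).trans (pdIter_prefix K)
    · have : k = K + 1 := by omega
      subst this; exact List.prefix_refl _
lemma getD_stable {k K n : ℕ} (h : k ≤ K) (hn : n < 2 ^ k) :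
    (pdIter K).getD n 0 = (pdIter k).getD n 0 := by
  obtain ⟨t, ht⟩ := pdIter_prefix' h
  rw [← ht, List.getD_append]
  rw [pdIter_length]; exact hn

lemma flatMap_getD_even (l : List ℕ) (n : ℕ) :
    (l.flatMap pdMu).getD (2 * n) 0 = 0 := by
  induction l generalizing n with
  | nil => simp
  | cons x l ih =>
    have hx : pdMu x = [0, 1] ∨ pdMu x = [0, 0] := by cases x <;> simp [pdMu]
    rcases hx with hx | hx <;>
    · rw [List.flatMap_cons, hx]
      cases n with
      | zero => rfl
      | succ n =>
        have : 2 * (n + 1) = (2 * n) + 1 + 1 := by ring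
        rw [this]
        simpa using ih n

lemma flatMap_getD_odd (l : List ℕ) (n : ℕ) (hn : n < l.length) :
    (l.flatMap pdMu).getD (2 * n + 1) 0 = 1 - l.getD n 0 := by
  induction l generalizing n with
  | nil => simp at hn
  | cons x l ih =>
    rw [List.flatMap_cons]
    cases n with
    | zero =>
      cases x with
      | zero => rfl
      | succ x => simp [pdMu, List.getD]
    | succ n =>
      have hx : pdMu x = [0, 1] ∨ pdMu x = [0, 0] := by cases x <;> simp [pdMu]
      have h2 : 2 * (n + 1) + 1 = (2 * n + 1) + 1 + 1 := by ring
      rcases hx with hx | hx <;>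
      · rw [hx, h2]
        simpa using ih n (by simpa using hn)

lemma pd_even (n : ℕ) : pd (2 * n) = 0 := by
  have h : pdIter (2 * n + 1) = (pdIter (2 * n)).flatMap pdMu := rfl
  rw [pd, h, flatMap_getD_even]

lemma pd_odd (n : ℕ) : pd (2 * n + 1) = 1 - pd n := by
  have h : pdIter (2 * n + 2) = (pdIter (2 * n + 1)).flatMap pdMu := rfl
  rw [pd, h, flatMap_getD_odd]
  · rw [pd]
    congr 1
    refine (getD_stable (by omega) ?_).trans (getD_stable (le_refl _) ?_).symm <;>
      exact Nat.lt_of_lt_of_le (Nat.lt_two_pow_self (n := n)) (Nat.pow_le_pow_right (by norm_num) (by omega))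
  · rw [pdIter_length]
    exact Nat.lt_of_lt_of_le (Nat.lt_two_pow_self (n := n)) (Nat.pow_le_pow_right (by norm_num) (by omega))

lemma pd_le_one (n : ℕ) : pd n ≤ 1 := by
  rcases Nat.even_or_odd n with ⟨k, hk⟩ | ⟨k, hk⟩
  · rw [hk, ← two_mul, pd_even]; omega
  · rw [hk, pd_odd]; omega

lemma pd_zero : pd 0 = 0 := by simpa using pd_even 0
lemma pd_one : pd 1 = 1 := by
  have := pd_odd 0; rw [pd_zero] at this; simpa using this

/-- partial sums of pd -/
noncomputable def pdS (n : ℕ) : ℕ := ∑ i ∈ Finset.range n, pd i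
/-- window sums -/
noncomputable def pdF (j ℓ : ℕ) : ℕ := ∑ i ∈ Finset.range ℓ, pd (j + i)

lemma pdS_succ (n : ℕ) : pdS (n + 1) = pdS n + pd n := Finset.sum_range_succ _ _

lemma pdF_S (j ℓ : ℕ) : pdF j ℓ + pdS j = pdS (j + ℓ) := by
  induction ℓ with
  | zero => simp [pdF, pdS]
  | succ ℓ ih =>
    rw [pdF, Finset.sum_range_succ, ← pdF, ← add_assoc j ℓ 1, pdS_succ]
    omega

lemma pdF_succ (j ℓ : ℕ) : pdF j (ℓ + 1) = pdF j ℓ + pd (j + ℓ) := Finset.sum_range_succ _ _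

lemma pdF_le (j ℓ : ℕ) : pdF j ℓ ≤ ℓ := by
  induction ℓ with
  | zero => simp [pdF]
  | succ ℓ ih => rw [pdF_succ]; have := pd_le_one (j + ℓ); omega

lemma pdS_even (m : ℕ) : pdS (2 * m) + pdS m = m := by
  induction m with
  | zero => simp [pdS]
  | succ m ih =>
    have h1 : 2 * (m + 1) = (2 * m + 1) + 1 := by ring
    rw [h1, pdS_succ, pdS_succ, pdS_succ, pd_even, pd_odd]
    have := pd_le_one m
    omega

lemma pdS_odd (m : ℕ) : pdS (2 * m + 1) + pdS m = m := by
  rw [pdS_succ, pd_even]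
  simpa using pdS_even m

-- window recurrences
lemma pdF_even_even (i m : ℕ) : pdF (2 * i) (2 * m) + pdF i m = m := by
  have h1 := pdF_S (2 * i) (2 * m)
  have h2 := pdF_S i m
  have h3 := pdS_even i
  have h4 := pdS_even (i + m)
  rw [show 2 * i + 2 * m = 2 * (i + m) by ring] at h1
  omega

lemma pdF_odd_even (i m : ℕ) : pdF (2 * i + 1) (2 * m) + pdF i m = m := by
  have h1 := pdF_S (2 * i + 1) (2 * m)
  have h2 := pdF_S i m
  have h3 := pdS_odd i
  have h4 := pdS_odd (i + m)
  rw [show 2 * i + 1 + 2 * m = 2 * (i + m) + 1 by ring] at h1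
  omega

lemma pdF_even_odd (i m : ℕ) : pdF (2 * i) (2 * m + 1) + pdF i m = m := by
  have h1 := pdF_S (2 * i) (2 * m + 1)
  have h2 := pdF_S i m
  have h3 := pdS_even i
  have h4 := pdS_odd (i + m)
  rw [show 2 * i + (2 * m + 1) = 2 * (i + m) + 1 by ring] at h1
  omega

lemma pdF_odd_odd (i m : ℕ) : pdF (2 * i + 1) (2 * m + 1) + pdF i (m + 1) = m + 1 := by
  have h1 := pdF_S (2 * i + 1) (2 * m + 1)
  have h2 := pdF_S i (m + 1)
  have h3 := pdS_odd i
  have h4 := pdS_even (i + m + 1)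
  rw [show 2 * i + 1 + (2 * m + 1) = 2 * (i + m + 1) by ring] at h1
  rw [show i + (m + 1) = i + m + 1 by ring] at h2
  omega

def pdMM : ℕ → ℕ × ℕ
  | 0 => (0, 0)
  | 1 => (0, 1)
  | n + 2 =>
    if h : n % 2 = 0 then
      (n / 2 + 1 - (pdMM (n / 2 + 1)).2, n / 2 + 1 - (pdMM (n / 2 + 1)).1)
    else
      (n / 2 + 1 - (pdMM (n / 2 + 1)).2, n / 2 + 2 - (pdMM (n / 2 + 2)).1)
  decreasing_by all_goals omega

lemma pdMM_even (m : ℕ) :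
    pdMM (2 * m) = (m - (pdMM m).2, m - (pdMM m).1) := by
  match m with
  | 0 => simp [pdMM]
  | k + 1 =>
    rw [show 2 * (k + 1) = 2 * k + 2 by ring, pdMM]
    simp [Nat.mul_div_cancel_left, Nat.mul_mod_right]

lemma pdMM_odd (m : ℕ) :
    pdMM (2 * m + 1) = (m - (pdMM m).2, m + 1 - (pdMM (m + 1)).1) := by
  match m with
  | 0 => simp [pdMM]
  | k + 1 =>
    rw [show 2 * (k + 1) + 1 = (2 * k + 1) + 2 by ring, pdMM]
    have h1 : (2 * k + 1) % 2 = 1 := by omega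
    have h2 : (2 * k + 1) / 2 = k := by omega
    simp [h1, h2]


lemma pdMM_zero : pdMM 0 = (0, 0) := by simp [pdMM]
lemma pdMM_one : pdMM 1 = (0, 1) := by simp [pdMM]
lemma pdF_zero (j : ℕ) : pdF j 0 = 0 := by simp [pdF]
lemma pdF_one (j : ℕ) : pdF j 1 = pd j := by simp [pdF]

/-- Main structural lemma. -/
lemma pdMM_main : ∀ ℓ : ℕ,
    (∀ x : ℕ, (∃ j, pdF j ℓ = x) ↔ (pdMM ℓ).1 ≤ x ∧ x ≤ (pdMM ℓ).2) ∧
    (pdMM ℓ).1 ≤ (pdMM ℓ).2 ∧ (pdMM ℓ).2 ≤ ℓ := by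
  intro ℓ
  induction ℓ using Nat.strong_induction_on with
  | _ ℓ IH =>
  match ℓ, IH with
  | 0, _ => refine ⟨fun x => ?_, ?_, ?_⟩ <;> simp [pdMM_zero, pdF_zero, eq_comm]
  | 1, _ =>
    refine ⟨fun x => ?_, ?_, ?_⟩ <;> simp [pdMM_one, pdF_one]
    constructor
    · rintro ⟨j, rfl⟩; exact pd_le_one j
    · intro hx
      rcases Nat.le_one_iff_eq_zero_or_eq_one.mp hx with rfl | rfl
      · exact ⟨0, pd_zero⟩
      · exact ⟨1, pd_one⟩
  | n + 2, IH =>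
    -- set m := (n+2)/2
    rcases Nat.even_or_odd (n + 2) with ⟨m, hm⟩ | ⟨m, hm⟩
    · -- even case ℓ = 2m, m ≥ 1
      have hm2 : n + 2 = 2 * m := by omega
      have hm1 : 1 ≤ m := by omega
      obtain ⟨hR, hab, hbm⟩ := IH m (by omega)
      rw [hm2, pdMM_even]
      refine ⟨fun x => ?_, by simp; omega, by simp; omega⟩
      simp only
      constructor
      · rintro ⟨j, rfl⟩
        rcases Nat.even_or_odd j with ⟨i, hi⟩ | ⟨i, hi⟩
        · have h := pdF_even_even i m
          rw [show j = 2 * i by omega] at *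
          have hy := (hR (pdF i m)).mp ⟨i, rfl⟩
          omega
        · have h := pdF_odd_even i m
          rw [show j = 2 * i + 1 by omega] at *
          have hy := (hR (pdF i m)).mp ⟨i, rfl⟩
          omega
      · rintro ⟨h1, h2⟩
        obtain ⟨i, hi⟩ := (hR (m - x)).mpr (by omega)
        refine ⟨2 * i, ?_⟩
        have h := pdF_even_even i m
        omega
    · -- odd case ℓ = 2m+1, m ≥ 1
      have hm2 : n + 2 = 2 * m + 1 := by omega
      have hm1 : 1 ≤ m := by omega
      obtain ⟨hR, hab, hbm⟩ := IH m (by omega)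
      obtain ⟨hR', hab', hbm'⟩ := IH (m + 1) (by omega)
      -- step inequalities
      have step1 : (pdMM (m+1)).1 ≤ (pdMM m).1 + 1 := by
        obtain ⟨j, hj⟩ := (hR (pdMM m).1).mpr ⟨le_refl _, hab⟩
        have h1 := pdF_succ j m
        have h2 := pd_le_one (j + m)
        have h3 := ((hR' (pdF j (m+1))).mp ⟨j, rfl⟩).1
        omega
      have step2 : (pdMM m).2 ≤ (pdMM (m+1)).2 := by
        obtain ⟨j, hj⟩ := (hR (pdMM m).2).mpr ⟨hab, le_refl _⟩
        have h1 := pdF_succ j m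
        have h3 := ((hR' (pdF j (m+1))).mp ⟨j, rfl⟩).2
        omega
      have step3 : (pdMM (m+1)).2 ≤ (pdMM m).2 + 1 := by
        obtain ⟨j, hj⟩ := (hR' (pdMM (m+1)).2).mpr ⟨hab', le_refl _⟩
        have h1 := pdF_succ j m
        have h2 := pd_le_one (j + m)
        have h3 := ((hR (pdF j m)).mp ⟨j, rfl⟩).2
        omega
      have step4 : (pdMM m).1 ≤ (pdMM (m+1)).1 := by
        obtain ⟨j, hj⟩ := (hR' (pdMM (m+1)).1).mpr ⟨le_refl _, hab'⟩
        have h1 := pdF_succ j m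
        have h3 := ((hR (pdF j m)).mp ⟨j, rfl⟩).1
        omega
      rw [hm2, pdMM_odd]
      refine ⟨fun x => ?_, by simp; omega, by simp; omega⟩
      simp only
      constructor
      · rintro ⟨j, rfl⟩
        rcases Nat.even_or_odd j with ⟨i, hi⟩ | ⟨i, hi⟩
        · have h := pdF_even_odd i m
          rw [show j = 2 * i by omega] at *
          have hy := (hR (pdF i m)).mp ⟨i, rfl⟩
          omega
        · have h := pdF_odd_odd i m
          rw [show j = 2 * i + 1 by omega] at *
          have hy := (hR' (pdF i (m+1))).mp ⟨i, rfl⟩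
          omega
      · rintro ⟨h1, h2⟩
        by_cases hc : x + (pdMM m).1 ≤ m
        · -- use even positions
          obtain ⟨i, hi⟩ := (hR (m - x)).mpr (by omega)
          refine ⟨2 * i, ?_⟩
          have h := pdF_even_odd i m
          omega
        · obtain ⟨i, hi⟩ := (hR' (m + 1 - x)).mpr (by omega)
          refine ⟨2 * i + 1, ?_⟩
          have h := pdF_odd_odd i m
          omega

lemma pdMM_bounds (ℓ : ℕ) : (pdMM ℓ).1 ≤ (pdMM ℓ).2 ∧ (pdMM ℓ).2 ≤ ℓ :=
  (pdMM_main ℓ).2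

lemma window_count (j ℓ : ℕ) :
    ((List.range ℓ).map (fun i => pd (j + i))).count 1 = pdF j ℓ ∧
    ((List.range ℓ).map (fun i => pd (j + i))).count 0 + pdF j ℓ = ℓ := by
  induction ℓ with
  | zero => simp [pdF_zero]
  | succ ℓ ih =>
    rw [List.range_succ, List.map_append, List.count_append, List.count_append,
      pdF_succ]
    have h := pd_le_one (j + ℓ)
    interval_cases h' : pd (j + ℓ) <;> simp [h'] <;> omega

lemma pdAb_eq (ℓ : ℕ) : pdAb ℓ = (pdMM ℓ).2 + 1 - (pdMM ℓ).1 := by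
  obtain ⟨hR, hab, hbl⟩ := pdMM_main ℓ
  have hset : {p : ℕ × ℕ | ∃ u : List ℕ, IsFactorI u pd ∧ u.length = ℓ ∧
      p = (u.count 0, u.count 1)} =
      (fun x => (ℓ - x, x)) '' Set.Icc (pdMM ℓ).1 (pdMM ℓ).2 := by
    ext p
    simp only [Set.mem_setOf_eq, Set.mem_image, Set.mem_Icc]
    constructor
    · rintro ⟨u, ⟨j, hu⟩, hlen, rfl⟩
      rw [hlen] at hu
      obtain ⟨h1, h0⟩ := window_count j ℓ
      refine ⟨pdF j ℓ, (hR _).mp ⟨j, rfl⟩, ?_⟩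
      rw [hu, h1]
      have : ((List.range ℓ).map (fun i => pd (j + i))).count 0 = ℓ - pdF j ℓ := by omega
      rw [this]
    · rintro ⟨x, hx, rfl⟩
      obtain ⟨j, hj⟩ := (hR x).mpr hx
      refine ⟨(List.range ℓ).map (fun i => pd (j + i)), ⟨j, by simp⟩, by simp, ?_⟩
      obtain ⟨h1, h0⟩ := window_count j ℓ
      rw [h1, hj]
      have : ((List.range ℓ).map (fun i => pd (j + i))).count 0 = ℓ - x := by omega
      rw [this]
  rw [pdAb]
  have hcoe : { p : ℕ × ℕ // ∃ u : List ℕ, IsFactorI u pd ∧ u.length = ℓ ∧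
      p = (u.count 0, u.count 1) } =
      ↥{p : ℕ × ℕ | ∃ u : List ℕ, IsFactorI u pd ∧ u.length = ℓ ∧
      p = (u.count 0, u.count 1)} := rfl
  rw [hcoe, Nat.card_coe_set_eq, hset, Set.ncard_image_of_injective _ (fun a b h => by
    simpa using congrArg Prod.snd h)]
  rw [← Finset.coe_Icc, Set.ncard_coe_finset, Nat.card_Icc]

theorem pd_abelian_complexity_recurrences :
    pdAb 1 = 2 ∧
    (∀ ℓ : ℕ, 1 ≤ ℓ →
      pdAb (2 * ℓ) = pdAb ℓ ∧
      pdAb (4 * ℓ + 1) = pdAb ℓ + 1 ∧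
      pdAb (4 * ℓ - 1) = pdAb ℓ + 1) ∧
    (∀ ρ : ℕ → ℕ, (∀ ℓ : ℕ, ρ ℓ = pdAb ℓ - 1) →
      ∀ ℓ : ℕ, 1 ≤ ℓ →
        ρ (2 * ℓ) = ρ ℓ ∧ ρ (4 * ℓ + 1) = ρ ℓ + 1 ∧ ρ (4 * ℓ - 1) = ρ ℓ + 1) := by
  have key : ∀ ℓ : ℕ, 1 ≤ ℓ →
      pdAb (2 * ℓ) = pdAb ℓ ∧
      pdAb (4 * ℓ + 1) = pdAb ℓ + 1 ∧
      pdAb (4 * ℓ - 1) = pdAb ℓ + 1 := by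
    intro ℓ hℓ
    obtain ⟨hab, hbl⟩ := pdMM_bounds ℓ
    have he := pdMM_even ℓ
    have ho := pdMM_odd ℓ
    have ho' := pdMM_odd (ℓ - 1)
    rw [show 2 * (ℓ - 1) + 1 = 2 * ℓ - 1 by omega,
      show ℓ - 1 + 1 = ℓ by omega] at ho'
    have h41 := pdMM_odd (2 * ℓ)
    rw [show 2 * (2 * ℓ) + 1 = 4 * ℓ + 1 by omega] at h41
    have h41' : pdMM (2 * ℓ + 1) = pdMM (2 * ℓ + 1) := rfl
    have h4m1 := pdMM_odd (2 * ℓ - 1)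
    rw [show 2 * (2 * ℓ - 1) + 1 = 4 * ℓ - 1 by omega,
      show 2 * ℓ - 1 + 1 = 2 * ℓ by omega] at h4m1
    have e1 := pdAb_eq ℓ
    have e2 := pdAb_eq (2 * ℓ)
    have e3 := pdAb_eq (4 * ℓ + 1)
    have e4 := pdAb_eq (4 * ℓ - 1)
    rw [he] at e2
    rw [h41, he, ho] at e3
    rw [h4m1, ho', he] at e4
    simp only at e2 e3 e4
    refine ⟨by omega, by omega, by omega⟩
  refine ⟨?_, key, ?_⟩
  · rw [pdAb_eq, pdMM_one]; rfl
  · intro ρ hρ ℓ hℓ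
    obtain ⟨h1, h2, h3⟩ := key ℓ hℓ
    obtain ⟨hab, hbl⟩ := pdMM_bounds ℓ
    have e1 := pdAb_eq ℓ
    have hone : 1 ≤ pdAb ℓ := by rw [e1]; omega
    simp only [hρ, h1, h2, h3]
    exact ⟨trivial, by omega, by omega⟩
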